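/- Let M = Γ(G,u) be a semisimple MV-algebra (G abelian) with a square root r. Then r is strict (r(0) = u − r(0)) if and only if the supremum ⋁_{n∈ℕ, n≥1} rⁿ(0) exists in M and equals u. -/

import Mathlib

section Core

variable {G : Type} [Lattice G] [AddGroup G]

/-- `u` is a strong unit of the ℓ-group `G`. -/
def IsStrongUnit (u : G) : Prop :=
  0 ≤ u ∧ ∀ g : G, ∃ n : ℕ, 1 ≤ n ∧ g ≤ n • u

/-- Truncated addition `x ⊕ y = (x + y) ⊓ u` of the pseudo MV-algebra `Γ(G,u)`. -/
def oplus (u x y : G) : G := (x + y) ⊓ u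

/-- Left negation `x⁻ = u - x`. -/
def negl (u x : G) : G := u - x

/-- Right negation `x~ = -x + u`. -/
def negr (u x : G) : G := -x + u

/-- `x ⊙ y = (x - u + y) ⊔ 0`. -/
def odot (u x y : G) : G := (x - u + y) ⊔ 0

/-- `r` is a square root on the pseudo MV-algebra `M = Γ(G,u)`:
it maps `M` to `M` and satisfies (Sq1), (Sq2), (Sq3). -/
def IsSquareRoot (u : G) (r : G → G) : Prop :=
  (∀ x, 0 ≤ x → x ≤ u → 0 ≤ r x ∧ r x ≤ u) ∧
  (∀ x, 0 ≤ x → x ≤ u → odot u (r x) (r x) = x) ∧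
  (∀ x y, 0 ≤ x → x ≤ u → 0 ≤ y → y ≤ u → odot u y y ≤ x → y ≤ r x) ∧
  (∀ x, 0 ≤ x → x ≤ u → r (negl u x) = oplus u (negl u (r x)) (r 0)) ∧
  (∀ x, 0 ≤ x → x ≤ u → r (negr u x) = oplus u (r 0) (negr u (r x)))

/-- `r` is strict: `r 0 = r 0⁻`. -/
def IsStrict (u : G) (r : G → G) : Prop := r 0 = negl u (r 0)

end Core

/-- An additive structure is two-divisible if every element is `h + h` for some `h`. -/
def TwoDivisible (A : Type) [Add A] : Prop := ∀ g : A, ∃ h : A, h + h = g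

/-- `m` is the infimum of `S` computed inside the interval `M = [0,u]`. -/
def IsInfIn {G : Type} [Lattice G] [AddGroup G] (u : G) (S : Set G) (m : G) : Prop :=
  (0 ≤ m ∧ m ≤ u) ∧ (∀ s ∈ S, m ≤ s) ∧
  ∀ x : G, 0 ≤ x → x ≤ u → (∀ s ∈ S, x ≤ s) → x ≤ m

/-- `m` is the supremum of `S` computed inside the interval `M = [0,u]`. -/
def IsSupIn {G : Type} [Lattice G] [AddGroup G] (u : G) (S : Set G) (m : G) : Prop :=
  (0 ≤ m ∧ m ≤ u) ∧ (∀ s ∈ S, s ≤ m) ∧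
  ∀ x : G, 0 ≤ x → x ≤ u → (∀ s ∈ S, s ≤ x) → m ≤ x

/-- An ideal of the pseudo MV-algebra `M = Γ(G,u) = [0,u]`. -/
def IsIdeal {G : Type} [Lattice G] [AddGroup G] (u : G) (I : Set G) : Prop :=
  I.Nonempty ∧ I ⊆ Set.Icc 0 u ∧
  (∀ x y : G, y ∈ Set.Icc 0 u → y ≤ x → x ∈ I → y ∈ I) ∧
  (∀ x ∈ I, ∀ y ∈ I, oplus u x y ∈ I)

/-- A maximal ideal of `M = Γ(G,u)`. -/
def IsMaximalIdeal {G : Type} [Lattice G] [AddGroup G] (u : G) (I : Set G) : Prop :=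
  IsIdeal u I ∧ I ≠ Set.Icc 0 u ∧
  ∀ J : Set G, IsIdeal u J → I ⊆ J → J = I ∨ J = Set.Icc 0 u

/-- A normal ideal of `M = Γ(G,u)`: `x ⊕ I = I ⊕ x` for all `x ∈ M`. -/
def IsNormalIdeal {G : Type} [Lattice G] [AddGroup G] (u : G) (I : Set G) : Prop :=
  IsIdeal u I ∧
  ∀ x ∈ Set.Icc (0 : G) u,
    (fun i => oplus u x i) '' I = (fun i => oplus u i x) '' I

/-- Auxiliary: in a semisimple `Γ(G,u)`, an element `c` with `n • c ≤ u` for all `n`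
is zero. -/
theorem arch_zero {G : Type} [Lattice G] [AddCommGroup G]
    [CovariantClass G G (· + ·) (· ≤ ·)]
    (u : G) (hu0 : 0 ≤ u)
    (hss : ∀ x : G, 0 ≤ x → x ≤ u →
      (∀ I : Set G, IsMaximalIdeal u I → x ∈ I) → x = 0)
    (c : G) (hc0 : 0 ≤ c) (hcu : c ≤ u) (hn : ∀ n : ℕ, n • c ≤ u) : c = 0 := by
  apply hss c hc0 hcu
  intro I hI
  obtain ⟨⟨hne, hsub, hdown, hoplus⟩, _, hmax⟩ := hI
  obtain ⟨x₀, hx₀⟩ := hne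
  have h0I : (0 : G) ∈ I := hdown x₀ 0 ⟨le_rfl, hu0⟩ (hsub hx₀).1 hx₀
  set J : Set G := {y : G | y ∈ Set.Icc 0 u ∧ ∃ i ∈ I, ∃ n : ℕ, y ≤ i + n • c} with hJ
  have hJideal : IsIdeal u J := by
    refine ⟨⟨0, ⟨⟨le_rfl, hu0⟩, 0, h0I, 0, by simp⟩⟩, fun y hy => hy.1, ?_, ?_⟩
    · rintro x y hy hyx ⟨-, i, hi, n, hb⟩
      exact ⟨hy, i, hi, n, hyx.trans hb⟩
    · rintro x ⟨hx, i₁, hi₁, n₁, hb₁⟩ y ⟨hy, i₂, hi₂, n₂, hb₂⟩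
      refine ⟨⟨le_inf (add_nonneg hx.1 hy.1) hu0, inf_le_right⟩,
        oplus u i₁ i₂, hoplus i₁ hi₁ i₂ hi₂, n₁ + n₂, ?_⟩
      have h1 : x + y ≤ (i₁ + i₂) + (n₁ + n₂) • c := by
        have := add_le_add hb₁ hb₂
        rw [add_nsmul]
        calc x + y ≤ (i₁ + n₁ • c) + (i₂ + n₂ • c) := this
        _ = i₁ + i₂ + (n₁ • c + n₂ • c) := by abel
      have h2 : (x + y) ⊓ u ≤ ((i₁ + i₂) + (n₁ + n₂) • c) ⊓ (u + (n₁ + n₂) • c) :=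
        le_inf (inf_le_left.trans h1)
          (inf_le_right.trans (le_add_of_nonneg_right (nsmul_nonneg hc0 _)))
      calc oplus u x y = (x + y) ⊓ u := rfl
      _ ≤ ((i₁ + i₂) + (n₁ + n₂) • c) ⊓ (u + (n₁ + n₂) • c) := h2
      _ = ((i₁ + i₂) ⊓ u) + (n₁ + n₂) • c := (inf_add (i₁ + i₂) u ((n₁ + n₂) • c)).symm
      _ = oplus u i₁ i₂ + (n₁ + n₂) • c := rfl
  have hIJ : I ⊆ J := fun i hi => ⟨hsub hi, i, hi, 0, by simp⟩
  rcases hmax J hJideal hIJ with hJI | hJu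
  · have hcJ : c ∈ J := ⟨⟨hc0, hcu⟩, 0, h0I, 1, by simp⟩
    rwa [hJI] at hcJ
  · have huJ : u ∈ J := by rw [hJu]; exact ⟨hu0, le_rfl⟩
    obtain ⟨-, i, hi, n, hun⟩ := huJ
    have hci : c ≤ i := by
      have h1 : n • c + c ≤ i + n • c := by
        have := hn (n + 1)
        rw [succ_nsmul] at this
        exact this.trans hun
      have h2 : c + n • c ≤ i + n • c := by rwa [add_comm] at h1
      exact le_of_add_le_add_right h2
    exact hdown i c ⟨hc0, hcu⟩ hci hi

/-- in a semisimple MV-algebra `M = Γ(G,u)` with square root `r`,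
`r` is strict iff `⋁_{n ≥ 1} rⁿ(0)` exists in `M` and equals `u`. -/
theorem stmt_17 {G : Type} [Lattice G] [AddCommGroup G]
    [CovariantClass G G (· + ·) (· ≤ ·)]
    (u : G) (hu : IsStrongUnit u) (r : G → G) (hr : IsSquareRoot u r)
    (hss : ∀ x : G, 0 ≤ x → x ≤ u →
      (∀ I : Set G, IsMaximalIdeal u I → x ∈ I) → x = 0) :
    r 0 = u - r 0 ↔ IsSupIn u {x : G | ∃ n : ℕ, 1 ≤ n ∧ x = r^[n] 0} u := by
  obtain ⟨hu0, -⟩ := hu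
  obtain ⟨hrange, hsq1, hsq2, hsq3, -⟩ := hr
  set t := r 0 with ht
  have ht0 : 0 ≤ t := (hrange 0 le_rfl hu0).1
  have htu : t ≤ u := (hrange 0 le_rfl hu0).2
  -- t + t ≤ u
  have h2t : t + t ≤ u := by
    have h := hsq1 0 le_rfl hu0
    have h' : t - u + t ≤ 0 := by
      have := sup_eq_right.mp h
      exact this
    have : t - u + t + u ≤ 0 + u := add_le_add_left h' u
    calc t + t = t - u + t + u := by abel
    _ ≤ 0 + u := this
    _ = u := zero_add u
  -- t ≤ r x for all x ∈ [0,u]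
  have t_le_r : ∀ x : G, 0 ≤ x → x ≤ u → t ≤ r x := by
    intro x hx hxu
    apply hsq2 x t hx hxu ht0 htu
    have : odot u t t = 0 := hsq1 0 le_rfl hu0
    rw [this]; exact hx
  -- iterates stay in [0,u]
  have range_a : ∀ n : ℕ, 0 ≤ r^[n] 0 ∧ r^[n] 0 ≤ u := by
    intro n
    induction n with
    | zero => exact ⟨le_rfl, hu0⟩
    | succ k ih =>
      rw [Function.iterate_succ_apply']
      exact hrange _ ih.1 ih.2
  constructor
  · -- strict → sup = u
    intro hstrict
    have htt : t + t = u := eq_sub_iff_add_eq.mp hstrict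
    -- 2 * a_{n+1} = a_n + u
    have step2 : ∀ n : ℕ, r^[n+1] 0 + r^[n+1] 0 = r^[n] 0 + u := by
      intro n
      have han := range_a n
      have key : odot u (r (r^[n] 0)) (r (r^[n] 0)) = r^[n] 0 := hsq1 _ han.1 han.2
      have hge : 0 ≤ r (r^[n] 0) - u + r (r^[n] 0) := by
        have h1 : t ≤ r (r^[n] 0) := t_le_r _ han.1 han.2
        have h2 : t + t ≤ r (r^[n] 0) + r (r^[n] 0) := add_le_add h1 h1
        rw [htt] at h2
        have h3 : 0 ≤ r (r^[n] 0) + r (r^[n] 0) - u := sub_nonneg.mpr h2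
        calc (0:G) ≤ r (r^[n] 0) + r (r^[n] 0) - u := h3
        _ = r (r^[n] 0) - u + r (r^[n] 0) := by abel
      have : r (r^[n] 0) - u + r (r^[n] 0) = r^[n] 0 := by
        have h := key
        unfold odot at h
        rwa [sup_eq_left.mpr hge] at h
      rw [Function.iterate_succ_apply']
      calc r (r^[n] 0) + r (r^[n] 0) = (r (r^[n] 0) - u + r (r^[n] 0)) + u := by abel
      _ = r^[n] 0 + u := by rw [this]
    -- 2^n • (u - a_n) = u
    have pow2 : ∀ n : ℕ, 2 ^ n • (u - r^[n] 0) = u := by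
      intro n
      induction n with
      | zero => simp
      | succ k ih =>
        have hd : (2:ℕ) • (u - r^[k+1] 0) = u - r^[k] 0 := by
          have := step2 k
          rw [two_nsmul]
          have : u - r^[k+1] 0 + (u - r^[k+1] 0) = u + u - (r^[k+1] 0 + r^[k+1] 0) := by abel
          rw [this, step2 k]
          abel
        rw [pow_succ, mul_comm, mul_nsmul, hd, ih]
    refine ⟨⟨hu0, le_rfl⟩, ?_, ?_⟩
    · rintro s ⟨n, -, rfl⟩
      exact (range_a n).2
    · intro x hx0 hxu hub
      set c := u - x with hc
      have hc0 : 0 ≤ c := sub_nonneg.mpr hxu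
      have hcu : c ≤ u := by
        calc c = u - x := rfl
        _ ≤ u - 0 := sub_le_sub_left hx0 u
        _ = u := sub_zero u
      have hnc : ∀ n : ℕ, n • c ≤ u := by
        intro n
        have h1 : r^[n] 0 ≤ x := by
          cases n with
          | zero => exact hx0
          | succ k => exact hub _ ⟨k+1, Nat.succ_le_succ (Nat.zero_le k), rfl⟩
        have h2 : c ≤ u - r^[n] 0 := sub_le_sub_left h1 u
        calc n • c ≤ 2 ^ n • c := nsmul_le_nsmul_left hc0 (Nat.le_of_lt (Nat.lt_two_pow_self (n := n)))
        _ ≤ 2 ^ n • (u - r^[n] 0) := nsmul_le_nsmul_right h2 _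
        _ = u := pow2 n
      have := arch_zero u hu0 hss c hc0 hcu hnc
      have hxu' : x = u := (sub_eq_zero.mp this).symm
      rw [hxu']
  · -- sup = u → strict
    intro hS
    -- r maps [0, t+t] into [0, t+t]
    have step : ∀ x : G, 0 ≤ x → x ≤ t + t → r x ≤ t + t := by
      intro x hx hx2
      have hxu : x ≤ u := hx2.trans h2t
      set y := r x with hy
      have hy0 : 0 ≤ y := (hrange x hx hxu).1
      have hyu : y ≤ u := (hrange x hx hxu).2
      have hyy : y - u + y ≤ x := by
        have h := hsq1 x hx hxu
        have : y - u + y ≤ odot u y y := le_sup_left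
        rwa [h] at this
      set c := y - (t + t) with hcdef
      have hcs : c ≤ u - (t + t) := sub_le_sub_right hyu (t + t)
      have h2c : c + c ≤ u - (t + t) := by
        have h1 : y + y ≤ u + x := by
          have := add_le_add_left hyy u
          calc y + y = y - u + y + u := by abel
          _ ≤ x + u := this
          _ = u + x := add_comm x u
        have h1' : y + y ≤ u + (t + t) := h1.trans (add_le_add_right hx2 u)
        calc c + c = y + y - ((t+t) + (t+t)) := by rw [hcdef]; abel
        _ ≤ u + (t + t) - ((t+t) + (t+t)) := sub_le_sub_right h1' _
        _ = u - (t + t) := by abel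
      set p := c ⊔ 0 with hpdef
      have hp0 : 0 ≤ p := le_sup_right
      have h2p : p + p ≤ u - (t + t) := by
        have hs0 : (0:G) ≤ u - (t + t) := sub_nonneg.mpr h2t
        have e1 : p + p = (c + c) ⊔ c ⊔ (c ⊔ 0) := by
          rw [hpdef]
          rw [sup_add c 0 (c ⊔ 0), zero_add, add_sup c 0 c, add_zero]
        rw [e1]
        exact sup_le (sup_le h2c hcs) (sup_le hcs hs0)
      -- t + p ≤ t  via Sq2 at 0
      have htp : t + p ≤ t := by
        have h2tp : (t + p) + (t + p) ≤ u := by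
          have : (t + p) + (t + p) = (t + t) + (p + p) := by abel
          rw [this]
          have := add_le_add_right h2p (t + t)
          calc (t + t) + (p + p) ≤ (t + t) + (u - (t + t)) := this
          _ = u := by abel
        have htp0 : 0 ≤ t + p := add_nonneg ht0 hp0
        have htpu : t + p ≤ u := by
          calc t + p = t + p + 0 := (add_zero _).symm
          _ ≤ (t + p) + (t + p) := add_le_add_right htp0 _
          _ ≤ u := h2tp
        apply hsq2 0 (t + p) le_rfl hu0 htp0 htpu
        have : (t + p) - u + (t + p) ≤ 0 := by
          have := sub_le_sub_right h2tp u
          calc (t + p) - u + (t + p) = (t + p) + (t + p) - u := by abel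
          _ ≤ u - u := this
          _ = 0 := by abel
        calc odot u (t+p) (t+p) = ((t + p) - u + (t + p)) ⊔ 0 := rfl
        _ ≤ 0 := sup_le this le_rfl
      have hple : p ≤ 0 := by
        have := le_of_add_le_add_left (a := t) (by rwa [add_zero] : t + p ≤ t + 0)
        exact this
      have hc0' : c ≤ 0 := le_sup_left.trans hple
      exact sub_nonpos.mp hc0'
    -- all iterates ≤ t + t
    have bound : ∀ n : ℕ, r^[n] 0 ≤ t + t := by
      intro n
      induction n with
      | zero => exact add_nonneg ht0 ht0
      | succ k ih =>
        rw [Function.iterate_succ_apply']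
        exact step _ (range_a k).1 ih
    have hu2t : u ≤ t + t :=
      hS.2.2 (t + t) (add_nonneg ht0 ht0) h2t (by rintro s ⟨n, -, rfl⟩; exact bound n)
    have : t + t = u := le_antisymm h2t hu2t
    rw [eq_sub_iff_add_eq]
    exact this
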